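/- Let S be a semidiscrete semigroup of Möbius transformations, let x ∈ ℝ̄, and let w ∈ ℍ be a point not fixed by any nonidentity element of S. Then x belongs to the closure in ℂ̄ of the Dirichlet region D_w(S) if and only if the S-orbit {g(w) : g ∈ S} does not meet the horodisc H_x(w) based at x whose boundary horocycle passes through w. -/

import Mathlib

open Filter Topology

noncomputable section

namespace MobiusSG

/-- The extended complex plane (Riemann sphere), with the one-point
compactification topology (which agrees with the chordal topology). -/
abbrev CHat : Type := OnePoint ℂ

/-- Self-maps of the extended complex plane. -/
abbrev MoebMap : Type := CHat → CHat

/-- The chordal metric χ on the extended complex plane. -/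
def chordal : CHat → CHat → ℝ
  | OnePoint.some z, OnePoint.some w =>
      2 * ‖z - w‖ /
        (Real.sqrt (1 + ‖z‖ ^ 2) * Real.sqrt (1 + ‖w‖ ^ 2))
  | OnePoint.some z, OnePoint.infty => 2 / Real.sqrt (1 + ‖z‖ ^ 2)
  | OnePoint.infty, OnePoint.some w => 2 / Real.sqrt (1 + ‖w‖ ^ 2)
  | OnePoint.infty, OnePoint.infty => 0

/-- The Möbius transformation z ↦ (az+b)/(cz+d), as a self-map of the sphere. -/
def mobiusFun (a b c d : ℝ) : MoebMap := fun z =>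
  match z with
  | OnePoint.infty =>
      if c = 0 then OnePoint.infty else OnePoint.some ((a : ℂ) / (c : ℂ))
  | OnePoint.some z =>
      if (c : ℂ) * z + (d : ℂ) = 0 then OnePoint.infty
      else OnePoint.some (((a : ℂ) * z + (b : ℂ)) / ((c : ℂ) * z + (d : ℂ)))

/-- The group 𝓜 of real Möbius transformations z ↦ (az+b)/(cz+d), ad − bc > 0. -/
def Mob : Set MoebMap :=
  {f | ∃ a b c d : ℝ, 0 < a * d - b * c ∧ f = mobiusFun a b c d}

/-- The uniform metric χ₀ on 𝓜. -/
def mDist (f g : MoebMap) : ℝ := ⨆ z : CHat, chordal (f z) (g z)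

/-- The upper half-plane ℍ, as a subset of ℂ. -/
def UHP : Set ℂ := {z | 0 < z.im}

/-- The extended real line ℝ̄ = ℝ ∪ {∞}, as a subset of the sphere. -/
def RExt : Set CHat :=
  {p | p = OnePoint.infty ∨ ∃ x : ℝ, p = OnePoint.some (x : ℂ)}

/-- The closed upper half-plane ℍ̄ = ℍ ∪ ℝ̄, as a subset of the sphere. -/
def HBar : Set CHat :=
  {p | p = OnePoint.infty ∨ ∃ z : ℂ, 0 ≤ z.im ∧ p = OnePoint.some z}

/-- Finite part of a point of the sphere (junk value 0 at ∞). -/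
def toC : CHat → ℂ
  | OnePoint.infty => 0
  | OnePoint.some z => z

/-- The hyperbolic metric ρ on the upper half-plane. -/
def hypDist (z w : ℂ) : ℝ :=
  2 * Real.arsinh (‖z - w‖ / (2 * Real.sqrt (z.im * w.im)))

/-- A semigroup: a nonempty subset of 𝓜 closed under composition. -/
def IsSemigroupOn (S : Set MoebMap) : Prop :=
  S.Nonempty ∧ S ⊆ Mob ∧ ∀ f ∈ S, ∀ g ∈ S, f ∘ g ∈ S

/-- S is semidiscrete: the identity is not an accumulation point of S in (𝓜, χ₀). -/
def Semidiscrete (S : Set MoebMap) : Prop :=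
  ¬ ∀ ε : ℝ, 0 < ε → ∃ f ∈ S, f ≠ id ∧ mDist f id < ε

/-- S is inverse free: no member of S has its inverse in S. -/
def InverseFree (S : Set MoebMap) : Prop :=
  ∀ f ∈ S, ∀ g ∈ S, f ∘ g ≠ id

/-- Membership in the semigroup generated by F. -/
inductive GenBy (F : Set MoebMap) : MoebMap → Prop
  | base {f : MoebMap} : f ∈ F → GenBy F f
  | comp {f g : MoebMap} : GenBy F f → GenBy F g → GenBy F (f ∘ g)

/-- The semigroup generated by F: all finite compositions of members of F. -/
def semigroupGen (F : Set MoebMap) : Set MoebMap := {f | GenBy F f}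

/-- Membership in the group generated (as a group) by F. -/
inductive GrpGenBy (F : Set MoebMap) : MoebMap → Prop
  | one : GrpGenBy F id
  | base {f : MoebMap} : f ∈ F → GrpGenBy F f
  | comp {f g : MoebMap} : GrpGenBy F f → GrpGenBy F g → GrpGenBy F (f ∘ g)
  | inv {f g : MoebMap} : GrpGenBy F f → f ∘ g = id → g ∘ f = id → GrpGenBy F g

/-- The group generated (as a group) by F. -/
def groupGen (F : Set MoebMap) : Set MoebMap := {f | GrpGenBy F f}

/-- (Fs n) is a composition sequence generated by F: Fs n = f 0 ∘ f 1 ∘ ⋯ ∘ f n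
with each f i ∈ F. -/
def IsCompSeq (F : Set MoebMap) (Fs : ℕ → MoebMap) : Prop :=
  ∃ f : ℕ → MoebMap, (∀ n, f n ∈ F) ∧ Fs 0 = f 0 ∧ ∀ n, Fs (n + 1) = Fs n ∘ f (n + 1)

/-- (Fs n) is an escaping sequence: for some w ∈ ℍ the orbit (Fs n w) does not
accumulate in ℍ. -/
def Escaping (Fs : ℕ → MoebMap) : Prop :=
  ∃ w : ℂ, w ∈ UHP ∧
    ¬ ∃ z : ℂ, z ∈ UHP ∧ MapClusterPt z atTop fun n => toC (Fs n (OnePoint.some w))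

/-- (Fs n) is an escaping sequence converging ideally to the point p of ℝ̄,
i.e. Fs n w → p in the chordal metric. -/
def ConvergesIdeallyTo (Fs : ℕ → MoebMap) (p : CHat) : Prop :=
  Escaping Fs ∧ p ∈ RExt ∧
    ∃ w : ℂ, w ∈ UHP ∧
      Tendsto (fun n => chordal (Fs n (OnePoint.some w)) p) atTop (nhds 0)

/-- A discrete subset of (𝓜, χ₀). -/
def IsDiscreteSet (S : Set MoebMap) : Prop :=
  ∀ f ∈ S, ∃ ε : ℝ, 0 < ε ∧ ∀ g ∈ S, g ≠ f → ε ≤ mDist g f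

/-- S is a group of Möbius maps. -/
def IsGroupOn (S : Set MoebMap) : Prop :=
  id ∈ S ∧ (∀ f ∈ S, ∀ g ∈ S, f ∘ g ∈ S) ∧
    ∀ f ∈ S, ∃ g ∈ S, f ∘ g = id ∧ g ∘ f = id

/-- S is a cocompact Fuchsian group: a discrete group of Möbius transformations
such that ℍ/S is compact (equivalently, some compact subset of ℍ has its
S-orbit covering ℍ). -/
def IsCocompactFuchsian (S : Set MoebMap) : Prop :=
  S ⊆ Mob ∧ IsGroupOn S ∧ IsDiscreteSet S ∧
    ∃ D : Set ℂ, IsCompact D ∧ D ⊆ UHP ∧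
      ∀ z ∈ UHP, ∃ g ∈ S, ∃ w ∈ D, g (OnePoint.some w) = OnePoint.some z

/-- The set S⁻¹ of inverses of members of S. -/
def invSet (S : Set MoebMap) : Set MoebMap :=
  {g | ∃ f ∈ S, f ∘ g = id ∧ g ∘ f = id}

/-- The forward limit set Λ⁺(S): accumulation points in ℝ̄ of the orbit of i. -/
def fwdLimitSet (S : Set MoebMap) : Set CHat :=
  {p | p ∈ RExt ∧ ∀ ε : ℝ, 0 < ε →
    ∃ g ∈ S, g (OnePoint.some Complex.I) ≠ p ∧
      chordal (g (OnePoint.some Complex.I)) p < ε}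

/-- The backward limit set Λ⁻(S) = Λ⁺(S⁻¹). -/
def bwdLimitSet (S : Set MoebMap) : Set CHat := fwdLimitSet (invSet S)

/-- S is elementary: it has a finite orbit in ℍ̄. -/
def Elementary (S : Set MoebMap) : Prop :=
  ∃ p ∈ HBar, ((fun g : MoebMap => g p) '' S).Finite

/-- The segment [0,1] of ℝ̄. -/
def unitClosedSeg : Set CHat := {p | ∃ x : ℝ, 0 ≤ x ∧ x ≤ 1 ∧ p = OnePoint.some (x : ℂ)}

/-- The segment (0,1) of ℝ̄. -/
def unitOpenSeg : Set CHat := {p | ∃ x : ℝ, 0 < x ∧ x < 1 ∧ p = OnePoint.some (x : ℂ)}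

/-- A closed interval of ℝ̄: a closed arc, neither a singleton nor all of ℝ̄;
equivalently, a Möbius image of [0,1]. -/
def IsClosedInterval (J : Set CHat) : Prop := ∃ g ∈ Mob, J = g '' unitClosedSeg

/-- An open interval of ℝ̄: a Möbius image of (0,1). -/
def IsOpenInterval (J : Set CHat) : Prop := ∃ g ∈ Mob, J = g '' unitOpenSeg

/-- f maps J strictly inside itself. -/
def StrictlyInside (f : MoebMap) (J : Set CHat) : Prop := f '' J ⊆ J ∧ f '' J ≠ J

/-- 𝓜(J): the Möbius transformations mapping J within itself. -/
def MobOf (J : Set CHat) : Set MoebMap := {f | f ∈ Mob ∧ f '' J ⊆ J}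

/-- S is dense in 𝓜. -/
def DenseInMob (S : Set MoebMap) : Prop :=
  ∀ f ∈ Mob, ∀ ε : ℝ, 0 < ε → ∃ g ∈ S, mDist g f < ε

/-- The Dirichlet region of S centred at w. -/
def DirichletRegion (S : Set MoebMap) (w : ℂ) : Set ℂ :=
  {z | z ∈ UHP ∧ ∀ g ∈ S, g ≠ id → hypDist z w ≤ hypDist z (toC (g (OnePoint.some w)))}

/-- The (open) horodisc based at x ∈ ℝ̄ whose boundary horocycle passes
through w ∈ ℍ. -/
def horodisc (x : CHat) (w : ℂ) : Set ℂ :=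
  match x with
  | OnePoint.infty => {z | w.im < z.im}
  | OnePoint.some p =>
      {z | ‖z - (p + Complex.I * ((‖w - p‖ ^ 2 / (2 * w.im) : ℝ) : ℂ))‖ <
          ‖w - p‖ ^ 2 / (2 * w.im)}

/-- The forward horocyclic limit set Λ_h⁺(S): points x of Λ⁺(S) such that every
orbit meets every horodisc based at x. -/
def horocyclicFwdLimitSet (S : Set MoebMap) : Set CHat :=
  {x | x ∈ fwdLimitSet S ∧ ∀ w ∈ UHP, ∀ u ∈ UHP,
    ∃ g ∈ S, toC (g (OnePoint.some w)) ∈ horodisc x u}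

/-- The end points of an interval J of ℝ̄ (its boundary within ℝ̄). -/
def endpointsOf (J : Set CHat) : Set CHat := {p | p ∈ J ∧ p ∈ closure (RExt \ J)}

/-- S is finitely generated. -/
def FinGen (S : Set MoebMap) : Prop :=
  ∃ F : Set MoebMap, F.Finite ∧ F.Nonempty ∧ S = semigroupGen F

/-- S is exceptional: S ⊆ 𝓜(J) for a closed interval J, the members of S fixing
J setwise form a nontrivial discrete group, and some member of S outside this
group fixes an end point of J. -/
def Exceptional (S : Set MoebMap) : Prop :=
  ∃ J : Set CHat, IsClosedInterval J ∧ (∀ f ∈ S, f '' J ⊆ J) ∧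
    (∃ g ∈ {g ∈ S | g '' J = J}, g ≠ id) ∧
    IsGroupOn {g ∈ S | g '' J = J} ∧ IsDiscreteSet {g ∈ S | g '' J = J} ∧
    ∃ f ∈ S, f '' J ≠ J ∧ ∃ p ∈ endpointsOf J, f p = p

/-- f is elliptic: a nonidentity map fixing a point of ℍ. -/
def Elliptic (f : MoebMap) : Prop :=
  f ≠ id ∧ ∃ z : ℂ, z ∈ UHP ∧ f (OnePoint.some z) = OnePoint.some z

/-- f is parabolic: a nonidentity map whose only fixed point lies on ℝ̄. -/
def Parabolic (f : MoebMap) : Prop :=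
  f ≠ id ∧ ∃ p ∈ RExt, {q : CHat | f q = q} = {p}

/-- α and β are the attracting resp. repelling fixed points of the hyperbolic
map f: both lie on ℝ̄, and iterates of f attract everything except β to α. -/
def HypPair (f : MoebMap) (α β : CHat) : Prop :=
  α ≠ β ∧ α ∈ RExt ∧ β ∈ RExt ∧ f α = α ∧ f β = β ∧
    ∀ p : CHat, p ≠ β → Tendsto (fun n => chordal (f^[n] p) α) atTop (nhds 0)

/-- f is hyperbolic. -/
def Hyperbolic (f : MoebMap) : Prop := ∃ α β : CHat, HypPair f α β

/-- Difference of two points of ℝ̄ (with the usual conventions about ∞, for use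
in the cross-ratio: any factor involving ∞ is replaced by 1). -/
def dR : CHat → CHat → ℝ
  | OnePoint.some x, OnePoint.some y => x.re - y.re
  | _, _ => 1

/-- The cross ratio C(f,g) = (αf−αg)(βf−βg)/((αf−βg)(βf−αg)). -/
def crossC (αf αg βf βg : CHat) : ℝ :=
  (dR αf αg * dR βf βg) / (dR αf βg * dR βf αg)

/-- tr[f,g]: the absolute trace of the commutator F G F⁻¹ G⁻¹ of normalized
(det = 1) matrix representatives. -/
def trComm (a b c d a' b' c' d' : ℝ) : ℝ :=
  |Matrix.trace (!![a, b; c, d] * !![a', b'; c', d'] *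
    !![d, -b; -c, a] * !![d', -b'; -c', a'])|

/-- f and g (parabolic or hyperbolic, with no common fixed point, with
attracting fixed points αf, αg) are antiparallel: neither closed interval
with end points αf and αg is mapped strictly inside itself by both f and g. -/
def Antiparallel (f g : MoebMap) (αf αg : CHat) : Prop :=
  ({p : CHat | f p = p} ∩ {p : CHat | g p = p} = ∅) ∧
    ∀ J : Set CHat, IsClosedInterval J → endpointsOf J = {αf, αg} →
      ¬ (StrictlyInside f J ∧ StrictlyInside g J)

/-- G is a Schottky group of rank two. -/
def SchottkyRank2 (G : Set MoebMap) : Prop :=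
  ∃ p ∈ Mob, ∃ q ∈ Mob, ∃ A B C D : Set CHat,
    IsOpenInterval A ∧ IsOpenInterval B ∧ IsOpenInterval C ∧ IsOpenInterval D ∧
    Disjoint A B ∧ Disjoint A C ∧ Disjoint A D ∧
    Disjoint B C ∧ Disjoint B D ∧ Disjoint C D ∧
    p '' (RExt \ closure A) ⊆ B ∧ q '' (RExt \ closure C) ⊆ D ∧
    G = groupGen {p, q}

/-- S is semidiscrete and inverse free. -/
def SDIF (S : Set MoebMap) : Prop := Semidiscrete S ∧ InverseFree S


section Aux

open Complex (normSq)

lemma mob_im_pos {f : MoebMap} (hf : f ∈ Mob) {z : ℂ} (hz : 0 < z.im) :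
    ∃ u : ℂ, f (OnePoint.some z) = OnePoint.some u ∧ 0 < u.im := by
  obtain ⟨a, b, c, d, hdet, rfl⟩ := hf
  have hcd : ¬(c = 0 ∧ d = 0) := by
    rintro ⟨rfl, rfl⟩; simp at hdet
  have hden : (c:ℂ)*z + d ≠ 0 := by
    intro h
    have him : c * z.im = 0 := by
      have := congrArg Complex.im h
      simpa [Complex.add_im, Complex.mul_im] using this
    have hc : c = 0 := by
      rcases mul_eq_zero.1 him with h' | h'
      · exact h'
      · exact absurd h' (ne_of_gt hz)
    have hd : d = 0 := by
      have := congrArg Complex.re h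
      simp [hc, Complex.add_re, Complex.mul_re] at this
      exact_mod_cast this
    exact hcd ⟨hc, hd⟩
  refine ⟨((a:ℂ)*z + b) / ((c:ℂ)*z + d), ?_, ?_⟩
  · simp [mobiusFun, hden]
  · have h : (((a:ℂ)*z + b) / ((c:ℂ)*z + d)).im
        = (a*d - b*c) * z.im / normSq ((c:ℂ)*z + d) := by
      rw [Complex.div_im]
      simp [Complex.add_im, Complex.add_re, Complex.mul_im, Complex.mul_re]
      ring
    rw [h]
    have : 0 < normSq ((c:ℂ)*z + d) := Complex.normSq_pos.2 hden
    positivity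

lemma hypDist_le_iff {z w u : ℂ} (hz : 0 < z.im) (hw : 0 < w.im) (hu : 0 < u.im) :
    (hypDist z w ≤ hypDist z u ↔ normSq (z-w) * u.im ≤ normSq (z-u) * w.im) := by
  unfold hypDist
  rw [mul_le_mul_iff_right₀ (by norm_num : (0:ℝ) < 2), Real.arsinh_le_arsinh]
  have h1 : (0:ℝ) < Real.sqrt (z.im * w.im) := Real.sqrt_pos.2 (by positivity)
  have h2 : (0:ℝ) < Real.sqrt (z.im * u.im) := Real.sqrt_pos.2 (by positivity)
  rw [div_le_div_iff₀ (by positivity) (by positivity)]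
  have e1 : Real.sqrt (z.im * u.im) * Real.sqrt (z.im * u.im) = z.im * u.im :=
    Real.mul_self_sqrt (by positivity)
  have e2 : Real.sqrt (z.im * w.im) * Real.sqrt (z.im * w.im) = z.im * w.im :=
    Real.mul_self_sqrt (by positivity)
  have a1 : ‖z - w‖ * ‖z - w‖ = normSq (z - w) :=
    by rw [← sq, Complex.sq_norm]
  have a2 : ‖z - u‖ * ‖z - u‖ = normSq (z - u) :=
    by rw [← sq, Complex.sq_norm]
  have habw : (0:ℝ) ≤ ‖z - w‖ := norm_nonneg _
  have habu : (0:ℝ) ≤ ‖z - u‖ := norm_nonneg _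
  constructor
  · intro h
    have hsq := mul_self_le_mul_self (by positivity) h
    nlinarith [hsq, e1, e2, a1, a2, hz, hu, hw]
  · intro h
    have key : (‖z - w‖ * (2 * Real.sqrt (z.im * u.im)))^2
        ≤ (‖z - u‖ * (2 * Real.sqrt (z.im * w.im)))^2 := by
      nlinarith [e1, e2, a1, a2, hz, hu, hw, h]
    calc ‖z - w‖ * (2 * Real.sqrt (z.im * u.im))
        = Real.sqrt ((‖z - w‖ * (2 * Real.sqrt (z.im * u.im)))^2) :=
          (Real.sqrt_sq (by positivity)).symm
      _ ≤ Real.sqrt ((‖z - u‖ * (2 * Real.sqrt (z.im * w.im)))^2) :=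
          Real.sqrt_le_sqrt key
      _ = ‖z - u‖ * (2 * Real.sqrt (z.im * w.im)) :=
          Real.sqrt_sq (by positivity)

lemma key_quad {Z W U : ℂ} (hre : Z.re = W.re) (h1 : W.im ≤ Z.im)
    (h0 : 0 < W.im) (h2 : 0 < U.im) (h3 : U.im ≤ W.im) :
    normSq (Z - W) * U.im ≤ normSq (Z - U) * W.im := by
  simp only [Complex.normSq_apply, Complex.sub_re, Complex.sub_im, hre, sub_self]
  have hy2 : W.im * W.im ≤ Z.im * Z.im := mul_self_le_mul_self h0.le h1
  have key : 0 ≤ (W.im - U.im) * (Z.im * Z.im - U.im * W.im) := by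
    apply mul_nonneg (by linarith)
    nlinarith
  nlinarith [key, mul_nonneg (mul_self_nonneg (W.re - U.re)) h0.le]

lemma quad_bounded {w u : ℂ} (hw : 0 < w.im) (hlt : w.im < u.im) :
    ∃ R : ℝ, 1 ≤ R ∧ ∀ z : ℂ, normSq (z - w) * u.im ≤ normSq (z - u) * w.im →
      ‖z‖ ≤ R := by
  refine ⟨max 1 ((2*u.im*‖w‖ + 2*w.im*‖u‖ + w.im*normSq u)/(u.im-w.im)),
    le_max_left _ _, ?_⟩
  intro z hz
  rcases le_or_gt (‖z‖) 1 with h | h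
  · exact h.trans (le_max_left _ _)
  refine le_trans ?_ (le_max_right _ _)
  rw [le_div_iff₀ (by linarith : (0:ℝ) < u.im - w.im)]
  have hb1 : z.re * w.re + z.im * w.im ≤ ‖z‖ * ‖w‖ := by
    have h1 := Complex.re_le_norm (z * (starRingEnd ℂ) w)
    rw [norm_mul, Complex.norm_conj] at h1
    have h3 : (z * (starRingEnd ℂ) w).re = z.re * w.re + z.im * w.im := by
      simp [Complex.mul_re, Complex.conj_re, Complex.conj_im]
    linarith [h3 ▸ h1]
  have hb2 : -(‖z‖ * ‖u‖) ≤ z.re * u.re + z.im * u.im := by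
    have h1 := Complex.abs_re_le_norm (z * (starRingEnd ℂ) u)
    rw [norm_mul, Complex.norm_conj] at h1
    have h3 : (z * (starRingEnd ℂ) u).re = z.re * u.re + z.im * u.im := by
      simp [Complex.mul_re, Complex.conj_re, Complex.conj_im]
    rw [h3] at h1
    have := neg_abs_le (z.re * u.re + z.im * u.im)
    linarith
  have hz2 : ‖z‖ * ‖z‖ = normSq z := by rw [← sq, Complex.sq_norm]
  simp only [Complex.normSq_apply, Complex.sub_re, Complex.sub_im] at hz ⊢
  have hzre : normSq z = z.re * z.re + z.im * z.im := by simp [Complex.normSq_apply]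
  have habz : (0:ℝ) ≤ ‖z‖ := norm_nonneg z
  have habw : (0:ℝ) ≤ ‖w‖ := norm_nonneg w
  have habu : (0:ℝ) ≤ ‖u‖ := norm_nonneg u
  have hnu : normSq u = u.re * u.re + u.im * u.im := by simp [Complex.normSq_apply]
  have hnw : (0:ℝ) ≤ w.re * w.re + w.im * w.im :=
    add_nonneg (mul_self_nonneg _) (mul_self_nonneg _)
  have hcancel : 0 ≤ (‖z‖ - 1) * ((u.re * u.re + u.im * u.im) * w.im) := by
    exact mul_nonneg (by linarith)
      (mul_nonneg (add_nonneg (mul_self_nonneg _) (mul_self_nonneg _)) hw.le)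
  nlinarith [hz, hb1, hb2, hz2, hzre, hnu, hcancel, hw, hlt, h,
    mul_le_mul_of_nonneg_right hb1 (le_of_lt (lt_trans hw hlt)),
    mul_le_mul_of_nonneg_right hb2 hw.le]

lemma neg_inv_im {ζ : ℂ} : (-(ζ⁻¹)).im = ζ.im / normSq ζ := by
  simp [Complex.inv_im, neg_div]

lemma neg_inv_sub (r : ℝ) {z w : ℂ} (hz : z ≠ (r:ℂ)) (hw : w ≠ (r:ℂ)) :
    (-(z - (r:ℂ))⁻¹) - (-(w - (r:ℂ))⁻¹) = (z - w) / ((z - (r:ℂ)) * (w - (r:ℂ))) := by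
  have hz' : z - (r:ℂ) ≠ 0 := sub_ne_zero.2 hz
  have hw' : w - (r:ℂ) ≠ 0 := sub_ne_zero.2 hw
  field_simp
  ring

lemma transform_iff (r : ℝ) {z w u : ℂ} (hz : z ≠ (r:ℂ)) (hw : w ≠ (r:ℂ)) (hu : u ≠ (r:ℂ)) :
    (normSq (z - w) * u.im ≤ normSq (z - u) * w.im ↔
      normSq ((-(z - (r:ℂ))⁻¹) - (-(w - (r:ℂ))⁻¹)) * (-(u - (r:ℂ))⁻¹).im ≤
        normSq ((-(z - (r:ℂ))⁻¹) - (-(u - (r:ℂ))⁻¹)) * (-(w - (r:ℂ))⁻¹).im) := by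
  have hz' : z - (r:ℂ) ≠ 0 := sub_ne_zero.2 hz
  have hw' : w - (r:ℂ) ≠ 0 := sub_ne_zero.2 hw
  have hu' : u - (r:ℂ) ≠ 0 := sub_ne_zero.2 hu
  have nz : 0 < normSq (z - (r:ℂ)) := Complex.normSq_pos.2 hz'
  have nw : 0 < normSq (w - (r:ℂ)) := Complex.normSq_pos.2 hw'
  have nu : 0 < normSq (u - (r:ℂ)) := Complex.normSq_pos.2 hu'
  have iur : (u - (r:ℂ)).im = u.im := by simp
  have iwr : (w - (r:ℂ)).im = w.im := by simp
  rw [neg_inv_sub r hz hw, neg_inv_sub r hz hu, neg_inv_im, neg_inv_im,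
    map_div₀, map_mul, map_div₀, map_mul, iur, iwr,
    div_mul_div_comm, div_mul_div_comm]
  have hd : normSq (z - (r:ℂ)) * normSq (u - (r:ℂ)) * normSq (w - (r:ℂ))
      = normSq (z - (r:ℂ)) * normSq (w - (r:ℂ)) * normSq (u - (r:ℂ)) := by ring
  rw [hd, div_le_div_iff_of_pos_right (by positivity)]

lemma horodisc_infty_iff {w u : ℂ} : u ∈ horodisc OnePoint.infty w ↔ w.im < u.im :=
  Iff.rfl

lemma abs_lt_iff_normSq {A : ℂ} {k : ℝ} (hk : 0 < k) :
    ‖A‖ < k ↔ normSq A < k ^ 2 := by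
  constructor
  · intro h
    have := pow_lt_pow_left₀ h (norm_nonneg A) (by norm_num : 2 ≠ 0)
    rwa [Complex.sq_norm] at this
  · intro h
    refine lt_of_pow_lt_pow_left₀ 2 hk.le ?_
    rwa [Complex.sq_norm]

lemma horodisc_some_iff (r : ℝ) {w u : ℂ} (hw : 0 < w.im) (hwr : w ≠ (r:ℂ)) :
    (u ∈ horodisc (OnePoint.some ((r:ℝ):ℂ)) w ↔
      normSq (u - (r:ℂ)) * w.im < normSq (w - (r:ℂ)) * u.im) := by
  have hk : ‖w - (r:ℂ)‖ ^ 2 = normSq (w - (r:ℂ)) := Complex.sq_norm _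
  have hkpos : 0 < ‖w - (r:ℂ)‖ ^ 2 / (2 * w.im) := by
    rw [hk]
    exact div_pos (Complex.normSq_pos.2 (sub_ne_zero.2 hwr)) (by linarith)
  have hmem : u ∈ horodisc (OnePoint.some ((r:ℝ):ℂ)) w ↔
      ‖u - ((r:ℂ) + Complex.I *
        ((‖w - (r:ℂ)‖ ^ 2 / (2 * w.im) : ℝ) : ℂ))‖ <
        ‖w - (r:ℂ)‖ ^ 2 / (2 * w.im) := Iff.rfl
  rw [hmem, abs_lt_iff_normSq hkpos]
  set k : ℝ := ‖w - (r:ℂ)‖ ^ 2 / (2 * w.im) with hkdef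
  have hkk : k * (2 * w.im) = normSq (w - (r:ℂ)) := by
    rw [hkdef, hk, div_mul_cancel₀]; positivity
  have hre : (u - ((r:ℂ) + Complex.I * ((k:ℝ):ℂ))).re = u.re - r := by simp
  have him : (u - ((r:ℂ) + Complex.I * ((k:ℝ):ℂ))).im = u.im - k := by simp
  rw [Complex.normSq_apply, hre, him]
  have hnu : normSq (u - (r:ℂ)) = (u.re - r) * (u.re - r) + u.im * u.im := by
    simp [Complex.normSq_apply]
  constructor
  · intro h
    have h' : normSq (u - (r:ℂ)) < 2*k*u.im := by nlinarith [h, hnu]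
    nlinarith [mul_lt_mul_of_pos_right h' hw, hkk]
  · intro h
    have hkk' : k * (2 * w.im) * u.im = normSq (w - (r:ℂ)) * u.im := by rw [hkk]
    have h2 : normSq (u - (r:ℂ)) * w.im < (2*k*u.im) * w.im := by linarith [h, hkk']
    have h3 := lt_of_mul_lt_mul_right h2 hw.le
    nlinarith [h3, hnu]

lemma infty_mem_closure {s : Set ℂ} (h : ∀ R : ℝ, ∃ z ∈ s, R < ‖z‖) :
    OnePoint.infty ∈ closure (OnePoint.some '' s) := by
  rw [mem_closure_iff_nhds]
  intro t ht
  rcases OnePoint.hasBasis_nhds_infty.mem_iff.1 ht with ⟨K, ⟨hKc, hKcomp⟩, hKt⟩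
  rcases hKcomp.isBounded.subset_closedBall 0 with ⟨R, hR⟩
  obtain ⟨z, hzs, hz⟩ := h (max R 0)
  refine ⟨OnePoint.some z, hKt ?_, ⟨z, hzs, rfl⟩⟩
  apply Set.mem_union_left
  refine ⟨z, fun hzK => ?_, rfl⟩
  have := hR hzK
  rw [Metric.mem_closedBall, Complex.dist_eq, sub_zero] at this
  exact absurd this (not_le.2 (lt_of_le_of_lt (le_max_left _ _) hz))

lemma infty_not_mem_closure {s : Set ℂ} (R : ℝ) (h : ∀ z ∈ s, ‖z‖ ≤ R) :
    OnePoint.infty ∉ closure (OnePoint.some '' s) := by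
  intro hc
  rw [mem_closure_iff_nhds] at hc
  have ht : (OnePoint.some '' (Metric.closedBall (0:ℂ) R)ᶜ ∪ {OnePoint.infty} : Set CHat)
      ∈ 𝓝 (OnePoint.infty : CHat) :=
    OnePoint.hasBasis_nhds_infty.mem_of_mem ⟨Metric.isClosed_closedBall, isCompact_closedBall _ _⟩
  rcases hc _ ht with ⟨p, hp, z, hzs, rfl⟩
  rcases hp with ⟨z', hz', hz'eq⟩ | hp
  · have hzz : z' = z := OnePoint.coe_injective hz'eq
    apply hz'
    rw [Metric.mem_closedBall, Complex.dist_eq, sub_zero, hzz]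
    exact h z hzs
  · simp only [Set.mem_singleton_iff] at hp
    exact Option.some_ne_none z hp

lemma coe_mem_closure {s : Set ℂ} {p : ℂ} (h : p ∈ closure s) :
    OnePoint.some p ∈ closure (OnePoint.some '' s) :=
  image_closure_subset_closure_image OnePoint.continuous_coe ⟨p, h, rfl⟩

lemma coe_not_mem_closure {s : Set ℂ} {p : ℂ} {ε : ℝ} (hε : 0 < ε)
    (h : ∀ z ∈ s, ε ≤ ‖z - p‖) :
    OnePoint.some p ∉ closure (OnePoint.some '' s) := by
  intro hc
  rw [mem_closure_iff_nhds] at hc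
  have ht : (OnePoint.some '' Metric.ball p ε) ∈ 𝓝 (OnePoint.some p : CHat) := by
    rw [OnePoint.nhds_coe_eq]
    exact Filter.image_mem_map (Metric.ball_mem_nhds p hε)
  rcases hc _ ht with ⟨q, ⟨z1, hz1, rfl⟩, z2, hz2, heq⟩
  obtain rfl : z2 = z1 := OnePoint.coe_injective heq
  rw [Metric.mem_ball, Complex.dist_eq] at hz1
  exact absurd hz1 (not_lt.2 (h z2 hz2))

end Aux

/-- Theorem aaw: let S be a semidiscrete semigroup, x ∈ ℝ̄, and w ∈ ℍ a point
not fixed by any nonidentity element of S. Then x lies in the closure (in ℂ̄)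
of the Dirichlet region D_w(S) if and only if the S-orbit of w does not meet
the horodisc H_x(w). -/
theorem statement7 (S : Set MoebMap) (hS : IsSemigroupOn S) (hsd : Semidiscrete S)
    (x : CHat) (hx : x ∈ RExt) (w : ℂ) (hw : w ∈ UHP)
    (hfix : ∀ g ∈ S, g ≠ id → g (OnePoint.some w) ≠ OnePoint.some w) :
    x ∈ closure (OnePoint.some '' DirichletRegion S w) ↔
      ∀ g ∈ S, toC (g (OnePoint.some w)) ∉ horodisc x w := by
  obtain ⟨hne, hMob, hcomp⟩ := hS
  have hwim : 0 < w.im := hw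
  have hwR : ∀ r : ℝ, w ≠ (r:ℂ) := by
    intro r h
    rw [h] at hwim
    simp at hwim
  have hwid : w ∉ horodisc x w := by
    rcases hx with rfl | ⟨r, rfl⟩
    · rw [horodisc_infty_iff]
      exact lt_irrefl _
    · rw [horodisc_some_iff r hwim (hwR r)]
      exact lt_irrefl _
  constructor
  · -- forward direction
    intro hcl g hg hmem
    obtain ⟨u, hgu, huim⟩ := mob_im_pos (hMob hg) hwim
    rw [hgu] at hmem
    simp only [toC] at hmem
    have hgne : g ≠ id := by
      rintro rfl
      have : w = u := OnePoint.coe_injective hgu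
      rw [← this] at hmem
      exact hwid hmem
    have hDsub : ∀ z ∈ DirichletRegion S w,
        Complex.normSq (z - w) * u.im ≤ Complex.normSq (z - u) * w.im := by
      intro z hz
      have h1 := hz.2 g hg hgne
      rw [hgu] at h1
      simp only [toC] at h1
      exact (hypDist_le_iff hz.1 hwim huim).1 h1
    rcases hx with rfl | ⟨r, rfl⟩
    · rw [horodisc_infty_iff] at hmem
      obtain ⟨R, hR1, hRb⟩ := quad_bounded hwim hmem
      exact infty_not_mem_closure R (fun z hz => hRb z (hDsub z hz)) hcl
    · have hur : u ≠ (r:ℂ) := by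
        intro h
        rw [h] at huim
        simp at huim
      rw [horodisc_some_iff r hwim (hwR r)] at hmem
      have hWim : 0 < (-(w - (r:ℂ))⁻¹).im := by
        rw [neg_inv_im]
        have : (w - (r:ℂ)).im = w.im := by simp
        rw [this]
        exact div_pos hwim (Complex.normSq_pos.2 (sub_ne_zero.2 (hwR r)))
      have hUW : (-(w - (r:ℂ))⁻¹).im < (-(u - (r:ℂ))⁻¹).im := by
        rw [neg_inv_im, neg_inv_im]
        have e1 : (w - (r:ℂ)).im = w.im := by simp
        have e2 : (u - (r:ℂ)).im = u.im := by simp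
        rw [e1, e2, div_lt_div_iff₀ (Complex.normSq_pos.2 (sub_ne_zero.2 (hwR r)))
          (Complex.normSq_pos.2 (sub_ne_zero.2 hur))]
        linarith [hmem]
      obtain ⟨R, hR1, hRb⟩ := quad_bounded hWim hUW
      have hRpos : (0:ℝ) < R := lt_of_lt_of_le one_pos hR1
      refine coe_not_mem_closure (ε := 1/R) (by positivity) ?_ hcl
      intro z hz
      have hzim : 0 < z.im := hz.1
      have hzr : z ≠ (r:ℂ) := by
        intro h
        rw [h] at hzim
        simp at hzim
      have hzu := hDsub z hz
      rw [transform_iff r hzr (hwR r) hur] at hzu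
      have hb := hRb _ hzu
      have habs : ‖-(z - (r:ℂ))⁻¹‖ = (‖z - (r:ℂ)‖)⁻¹ := by
        rw [norm_neg, norm_inv]
      rw [habs] at hb
      have hapos : 0 < ‖z - (r:ℂ)‖ :=
        norm_pos_iff.2 (sub_ne_zero.2 hzr)
      rw [div_le_iff₀ hRpos]
      have h1 : (‖z - (r:ℂ)‖)⁻¹ * ‖z - (r:ℂ)‖ = 1 :=
        inv_mul_cancel₀ (ne_of_gt hapos)
      nlinarith [mul_le_mul_of_nonneg_right hb hapos.le]
  · -- backward direction
    intro horb
    have hmemD : ∀ z : ℂ, 0 < z.im →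
        (∀ u : ℂ, 0 < u.im → u ∉ horodisc x w → hypDist z w ≤ hypDist z u) →
        z ∈ DirichletRegion S w := by
      intro z hz h
      refine ⟨hz, ?_⟩
      intro g hg _
      obtain ⟨u, hgu, huim⟩ := mob_im_pos (hMob hg) hwim
      have horb' := horb g hg
      rw [hgu] at horb' ⊢
      simp only [toC] at horb' ⊢
      exact h u huim horb'
    rcases hx with rfl | ⟨r, rfl⟩
    · apply infty_mem_closure
      intro R
      set y : ℝ := max w.im (R + 1) with hy
      set Z : ℂ := ⟨w.re, y⟩ with hZdef
      have hZim : Z.im = y := rfl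
      have hZre : Z.re = w.re := rfl
      have hyw : w.im ≤ y := le_max_left _ _
      refine ⟨Z, hmemD Z (lt_of_lt_of_le hwim hyw) ?_, ?_⟩
      · intro u hu humem
        rw [horodisc_infty_iff] at humem
        exact (hypDist_le_iff (lt_of_lt_of_le hwim hyw) hwim hu).2
          (key_quad hZre (hZim ▸ hyw) hwim hu (not_lt.1 humem))
      · have h1 : Z.im ≤ ‖Z‖ := le_trans (le_abs_self _) (Complex.abs_im_le_norm Z)
        have h2 : R + 1 ≤ y := le_max_right _ _
        rw [hZim] at h1
        linarith
    · have hwr := hwR r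
      set W : ℂ := -(w - (r:ℂ))⁻¹ with hWdef
      have hWim : 0 < W.im := by
        rw [hWdef, neg_inv_im]
        have e1 : (w - (r:ℂ)).im = w.im := by simp
        rw [e1]
        exact div_pos hwim (Complex.normSq_pos.2 (sub_ne_zero.2 hwr))
      apply coe_mem_closure
      rw [Metric.mem_closure_iff]
      intro ε hε
      set y : ℝ := max W.im (1/ε + 1) with hy
      have hy2 : 1/ε + 1 ≤ y := le_max_right _ _
      have hypos : 0 < y := lt_of_lt_of_le (by positivity) hy2
      set Z : ℂ := ⟨W.re, y⟩ with hZdef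
      have hZim : Z.im = y := rfl
      have hZre : Z.re = W.re := rfl
      have hZ0 : Z ≠ 0 := by
        intro h
        have h0 : Z.im = 0 := by rw [h]; rfl
        rw [hZim] at h0
        linarith
      set z : ℂ := (r:ℂ) - Z⁻¹ with hzdef
      have hzsub : z - (r:ℂ) = -Z⁻¹ := by rw [hzdef]; ring
      have hinv : -(z - (r:ℂ))⁻¹ = Z := by rw [hzsub, inv_neg, neg_neg, inv_inv]
      have hzim : 0 < z.im := by
        have h3 : z.im = Z.im / Complex.normSq Z := by
          rw [hzdef]
          simp [Complex.sub_im, Complex.inv_im, Complex.ofReal_im, neg_div]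
        rw [h3, hZim]
        exact div_pos hypos (Complex.normSq_pos.2 hZ0)
      have hzr : z ≠ (r:ℂ) := by
        intro h
        rw [h] at hzim
        simp at hzim
      refine ⟨z, hmemD z hzim ?_, ?_⟩
      · intro u hu humem
        have hur : u ≠ (r:ℂ) := by
          intro h
          rw [h] at hu
          simp at hu
        rw [horodisc_some_iff r hwim hwr] at humem
        apply (hypDist_le_iff hzim hwim hu).2
        rw [transform_iff r hzr hwr hur, hinv]
        have hUim : 0 < (-(u - (r:ℂ))⁻¹).im := by
          rw [neg_inv_im]
          have e2 : (u - (r:ℂ)).im = u.im := by simp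
          rw [e2]
          exact div_pos hu (Complex.normSq_pos.2 (sub_ne_zero.2 hur))
        have hUW : (-(u - (r:ℂ))⁻¹).im ≤ W.im := by
          rw [hWdef, neg_inv_im, neg_inv_im]
          have e1 : (w - (r:ℂ)).im = w.im := by simp
          have e2 : (u - (r:ℂ)).im = u.im := by simp
          rw [e1, e2, div_le_div_iff₀ (Complex.normSq_pos.2 (sub_ne_zero.2 hur))
            (Complex.normSq_pos.2 (sub_ne_zero.2 hwr))]
          linarith [not_lt.1 humem]
        exact key_quad hZre (hZim ▸ (le_max_left W.im (1/ε + 1) : W.im ≤ y)) hWim hUim hUW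
      · have h4 : (r:ℂ) - z = Z⁻¹ := by rw [hzdef]; ring
        have h1 : dist (r:ℂ) z = (‖Z‖)⁻¹ := by
          rw [Complex.dist_eq, h4, norm_inv]
        have h2 : y ≤ ‖Z‖ := by
          have h5 := Complex.abs_im_le_norm Z
          rw [hZim] at h5
          exact le_trans (le_abs_self y) h5
        rw [h1]
        have hone : 1 < y * ε := (div_lt_iff₀ hε).1 (lt_of_lt_of_le (by linarith [one_div_pos.2 hε] : 1/ε < 1/ε + 1) hy2)
        calc (‖Z‖)⁻¹ ≤ y⁻¹ := inv_anti₀ hypos h2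
          _ < ε := by
              rw [inv_eq_one_div, div_lt_iff₀ hypos]
              linarith

end MobiusSG

end
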